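/- For every nonnegative integer m and every complex number z that is not one of the integers 0, 1, …, m, the generalized binomial coefficient satisfies binom(m, z) = (−1)^m · m! · sin(πz) / (π · ∏_{k=0}^{m} (z − k)). -/

import Mathlib

open scoped Real

/-- The generalized binomial coefficient `binom w z = Γ(w+1) / (Γ(z+1) Γ(w-z+1))`. -/
noncomputable def cbinom (w z : ℂ) : ℂ :=
  Complex.Gamma (w + 1) / (Complex.Gamma (z + 1) * Complex.Gamma (w - z + 1))

lemma gamma_prod_aux (m : ℕ) (z : ℂ) (hz : ∀ k : ℕ, k ≤ m → z ≠ (k : ℂ)) :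
    Complex.Gamma (z + 1) =
      (∏ k ∈ Finset.range (m + 1), (z - k)) * Complex.Gamma (z - m) := by
  induction m with
  | zero =>
      have h0 : z ≠ 0 := by simpa using hz 0 le_rfl
      rw [Complex.Gamma_add_one z h0]
      simp
  | succ n ih =>
      rw [ih (fun k hk => hz k (hk.trans (Nat.le_succ n)))]
      have h : z - (n : ℂ) = (z - ((n : ℕ) + 1 : ℕ)) + 1 := by push_cast; ring
      have hne : z - ((n : ℕ) + 1 : ℕ) ≠ 0 := by
        have := hz (n + 1) le_rfl
        intro hc; apply this; push_cast at hc ⊢; linear_combination hc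
      rw [h, Complex.Gamma_add_one _ hne]
      conv_rhs => rw [Finset.prod_range_succ]
      rw [mul_assoc]

lemma sin_sub_nat_pi (z : ℂ) (m : ℕ) :
    Complex.sin (z - m * π) = (-1) ^ m * Complex.sin z := by
  induction m with
  | zero => simp
  | succ n ih =>
      have : z - ((n : ℂ) + 1) * π = (z - n * π) - π := by ring
      push_cast
      rw [this, Complex.sin_sub_pi, ih]
      ring

theorem binom_nat_eq_sin_div_prod (m : ℕ) (z : ℂ)
    (hz : ∀ k : ℕ, k ≤ m → z ≠ (k : ℂ)) :
    cbinom (m : ℂ) z =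
      (-1) ^ m * (m.factorial : ℂ) * Complex.sin (π * z) /
        ((π : ℂ) * ∏ k ∈ Finset.range (m + 1), (z - k)) := by
  set P := ∏ k ∈ Finset.range (m + 1), (z - k) with hP
  have hPne : P ≠ 0 := by
    rw [hP]
    exact Finset.prod_ne_zero_iff.mpr fun k hk =>
      sub_ne_zero.mpr (hz k (Nat.lt_succ_iff.mp (Finset.mem_range.mp hk)))
  have hpi : (π : ℂ) ≠ 0 := by
    exact_mod_cast Real.pi_ne_zero
  have harg : (m : ℂ) - z + 1 = 1 - (z - m) := by ring
  have hrefl : Complex.Gamma (z - m) * Complex.Gamma (1 - (z - m)) =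
      π / Complex.sin (π * (z - m)) := Complex.Gamma_mul_Gamma_one_sub _
  have hsin : Complex.sin (π * (z - m)) = (-1) ^ m * Complex.sin (π * z) := by
    have : (π : ℂ) * (z - m) = π * z - m * π := by ring
    rw [this, sin_sub_nat_pi]
  rw [cbinom, Complex.Gamma_nat_eq_factorial, gamma_prod_aux m z hz, harg,
    mul_assoc, hrefl, hsin]
  -- now: m! / (P * (π / ((-1)^m * sin (π z)))) = (-1)^m * m! * sin (π z) / (π * P)
  set S := Complex.sin (π * z) with hS
  rcases eq_or_ne S 0 with h | h
  · simp [h]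
  · have hne : ((-1 : ℂ)) ^ m * S ≠ 0 := mul_ne_zero (pow_ne_zero _ (by norm_num)) h
    rw [← hP]
    field_simp
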